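/- Fix η ∈ (0,1) and r > 0. Define h_r : ℝ → ℝ by h_r(s) = e^{-s} for s ≥ 0 and h_r(s) = (1-s)^{r-1} for s ≤ 0. Then there exist constants C₋, C₊ > 0, independent of i, such that for every integer i ≥ 1, C₋(1+i)^{1+r} ≤ ∫_ℝ min(i, e^{s+ηi}) h_r(s) ds ≤ C₊(1+i)^{1+r}. -/

import Mathlib

open MeasureTheory Set Filter

lemma aux_pow_le (n : ℕ) {x : ℝ} (hx : 0 ≤ x) : x ^ n ≤ n.factorial * Real.exp x := by
  have h := Real.sum_le_exp_of_nonneg hx (n+1)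
  have h2 : x ^ n / n.factorial ≤ ∑ i ∈ Finset.range (n+1), x ^ i / i.factorial := by
    exact Finset.single_le_sum (f := fun i => x ^ i / (i.factorial : ℝ))
      (fun i _ => by positivity) (Finset.self_mem_range_succ n)
  have h3 := h2.trans h
  have hf : (0:ℝ) < n.factorial := by positivity
  rw [div_le_iff₀ hf] at h3
  linarith [h3]

lemma aux_M {p : ℝ} (hp : 0 ≤ p) :
    ∃ M : ℝ, 0 < M ∧ ∀ t : ℝ, 0 ≤ t → (1 + t) ^ p ≤ M * Real.exp (t / 2) := by
  set n := ⌈p⌉₊ with hn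
  refine ⟨2 ^ n * n.factorial * Real.exp (1/2), by positivity, fun t ht => ?_⟩
  have h1 : (1 + t) ^ p ≤ (1 + t) ^ (n : ℝ) :=
    Real.rpow_le_rpow_of_exponent_le (by linarith) (Nat.le_ceil p)
  rw [Real.rpow_natCast] at h1
  have h2 : ((1 + t)/2) ^ n ≤ n.factorial * Real.exp ((1 + t)/2) := aux_pow_le n (by linarith)
  have h3 : (1 + t) ^ n = 2 ^ n * ((1 + t)/2) ^ n := by
    rw [← mul_pow]
    congr 1
    ring
  have h4 : Real.exp ((1 + t)/2) = Real.exp (1/2) * Real.exp (t/2) := by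
    rw [← Real.exp_add]; ring_nf
  calc (1 + t) ^ p ≤ (1 + t) ^ n := h1
    _ = 2 ^ n * ((1 + t)/2) ^ n := h3
    _ ≤ 2 ^ n * (n.factorial * Real.exp ((1 + t)/2)) := by
        apply mul_le_mul_of_nonneg_left h2 (by positivity)
    _ = 2 ^ n * n.factorial * Real.exp (1/2) * Real.exp (t/2) := by rw [h4]; ring

lemma aux_hasDeriv (b x : ℝ) :
    HasDerivAt (fun s : ℝ => 2 * Real.exp ((s - b)/2)) (Real.exp ((x - b)/2)) x := by
  have h : HasDerivAt (fun s : ℝ => (s - b)/2) (1/2) x :=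
    ((hasDerivAt_id x).sub_const b).div_const 2
  have := (h.exp).const_mul 2
  exact this.congr_deriv (by ring)

lemma aux_exp_Iic (b : ℝ) :
    IntegrableOn (fun s : ℝ => Real.exp ((s - b)/2)) (Iic b) := by
  apply integrableOn_Iic_of_intervalIntegral_norm_bounded 2 b
    (fun y : ℝ => (Continuous.intervalIntegrable (by continuity) y b).1) tendsto_id
  filter_upwards with y
  simp_rw [Real.norm_of_nonneg (Real.exp_pos _).le]
  have heval : (∫ x in y..b, Real.exp ((x - b)/2)) =
      2 * Real.exp ((b - b)/2) - 2 * Real.exp ((y - b)/2) := by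
    apply intervalIntegral.integral_eq_sub_of_hasDerivAt (fun x _ => aux_hasDeriv b x)
    exact Continuous.intervalIntegrable (by continuity) y b
  rw [heval]
  have := Real.exp_pos ((y - b)/2)
  simp only [sub_self, zero_div, Real.exp_zero]
  linarith

lemma aux_exp_Iic_int (b : ℝ) :
    (∫ s in Iic b, Real.exp ((s - b)/2)) = 2 := by
  have h := integral_Iic_of_hasDerivAt_of_tendsto
    (f := fun s : ℝ => 2 * Real.exp ((s - b)/2)) (f' := fun s => Real.exp ((s - b)/2))
    (a := b) (m := 0) ?_ (fun x _ => aux_hasDeriv b x) (aux_exp_Iic b) ?_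
  · rw [h]; simp
  · exact (Continuous.continuousWithinAt (by continuity))
  · have h1 : Tendsto (fun s : ℝ => (s - b)/2) atBot atBot := by
      apply Tendsto.atBot_div_const (by norm_num : (0:ℝ) < 2)
      simpa [sub_eq_add_neg] using tendsto_atBot_add_const_right atBot (-b) tendsto_id
    have := (Real.tendsto_exp_atBot.comp h1).const_mul (2:ℝ)
    simpa using this

/-- The kernel `h_r`. -/
noncomputable def hker (r : ℝ) (s : ℝ) : ℝ :=
  if 0 ≤ s then Real.exp (-s) else (1 - s) ^ (r - 1)

lemma hker_meas (r : ℝ) : Measurable (hker r) := by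
  have hrw : hker r = fun s => if 0 ≤ s then Real.exp (-s)
      else Real.exp (Real.log (1 - s) * (r - 1)) := by
    funext s
    unfold hker
    split_ifs with h
    · rfl
    · rw [Real.rpow_def_of_pos (by push_neg at h; linarith)]
  rw [hrw]
  exact Measurable.ite measurableSet_Ici (Real.measurable_exp.comp measurable_neg)
    (Real.measurable_exp.comp
      ((Real.measurable_log.comp (measurable_const.sub measurable_id)).mul measurable_const))

lemma hker_nonneg (r s : ℝ) : 0 ≤ hker r s := by
  unfold hker
  split_ifs with h
  · exact (Real.exp_pos _).le
  · exact Real.rpow_nonneg (by push_neg at h; linarith) _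

lemma hker_of_nonpos (r : ℝ) {s : ℝ} (hs : s ≤ 0) : hker r s = (1 - s) ^ (r - 1) := by
  unfold hker
  split_ifs with h
  · have : s = 0 := le_antisymm hs h
    subst this
    simp
  · rfl

lemma hker_of_nonneg (r : ℝ) {s : ℝ} (hs : 0 ≤ s) : hker r s = Real.exp (-s) := if_pos hs

lemma aux_cont_poly (r : ℝ) : ContinuousOn (fun s : ℝ => (1 - s) ^ (r - 1)) (Iic 0) := by
  intro y hy
  have h1 : (0:ℝ) < 1 - y := by simp only [mem_Iic] at hy; linarith
  exact ((continuousAt_const.sub continuousAt_id).rpow_const (Or.inl h1.ne')).continuousWithinAt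

lemma aux_int_poly {r : ℝ} (hr : 0 < r) {c : ℝ} (hc : c ≤ 0) :
    (∫ s in c..(0:ℝ), (1 - s) ^ (r - 1)) = ((1 - c) ^ r - 1)/r := by
  have hii : IntervalIntegrable (fun s : ℝ => (1 - s) ^ (r-1)) volume c 0 := by
    apply ContinuousOn.intervalIntegrable
    apply (aux_cont_poly r).mono
    rw [Set.uIcc_of_le hc]
    exact Icc_subset_Iic_self
  have hderiv : ∀ y ∈ Set.uIcc c 0,
      HasDerivAt (fun s : ℝ => -(1 - s) ^ r / r) ((1 - y) ^ (r - 1)) y := by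
    intro y hy
    rw [Set.uIcc_of_le hc] at hy
    have h1 : (0:ℝ) < 1 - y := by
      have := hy.2; linarith
    have h2 : HasDerivAt (fun s : ℝ => 1 - s) (-1) y := by
      simpa using (hasDerivAt_id y).const_sub 1
    have h3 : HasDerivAt (fun z : ℝ => z ^ r) (r * (1 - y) ^ (r - 1)) (1 - y) :=
      Real.hasDerivAt_rpow_const (Or.inl h1.ne')
    have h4 := (h3.comp y h2)
    have h5 := (h4.div_const r).neg
    have h6 := h5.congr_deriv (show -(r * (1 - y) ^ (r - 1) * -1 / r) = (1 - y) ^ (r - 1) by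
      rw [show -(r * (1 - y) ^ (r - 1) * -1 / r) = (1 - y) ^ (r - 1) * (r / r) by ring,
        div_self hr.ne', mul_one])
    refine h6.congr_of_eventuallyEq (Filter.Eventually.of_forall fun z => ?_)
    simp [Function.comp, neg_div]
  rw [intervalIntegral.integral_eq_sub_of_hasDerivAt hderiv hii]
  rw [show (1:ℝ) - 0 = 1 by ring, Real.one_rpow]
  ring

set_option maxHeartbeats 1000000 in
theorem hker_integral_two_sided (η r : ℝ) (hη : η ∈ Set.Ioo (0 : ℝ) 1) (hr : 0 < r) :
    ∃ Cm Cp : ℝ, 0 < Cm ∧ 0 < Cp ∧ ∀ i : ℕ, 1 ≤ i →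
      Cm * (1 + (i : ℝ)) ^ (1 + r) ≤
          (∫ s : ℝ, min (i : ℝ) (Real.exp (s + η * i)) * hker r s) ∧
      (∫ s : ℝ, min (i : ℝ) (Real.exp (s + η * i)) * hker r s) ≤
          Cp * (1 + (i : ℝ)) ^ (1 + r) := by
  obtain ⟨hη0, hη1⟩ := hη
  obtain ⟨M, hM0, hM⟩ := aux_M (le_max_right (r-1) 0)
  set q := max (r-1) 0 with hq_def
  have hq0 : 0 ≤ q := le_max_right _ _
  have hqr : q ≤ r := max_le (by linarith) hr.le
  set n := ⌈1+r⌉₊ with hn_def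
  have hn : 1 + r ≤ (n:ℝ) := Nat.le_ceil _
  have hmax1r : (0:ℝ) < max 1 r := lt_of_lt_of_le one_pos (le_max_left 1 r)
  have h2r : (0:ℝ) < (2:ℝ) ^ (1+r) := Real.rpow_pos_of_pos two_pos _
  have hnfac : (0:ℝ) < (n.factorial : ℝ) := by positivity
  set C1 := (η/2) ^ r / (2 * max 1 r) with hC1
  set C2 := (η/2) ^ n / ((n.factorial : ℝ) * 2 ^ (1+r)) with hC2
  have hη2 : (0:ℝ) < η/2 := by linarith
  have hC1pos : 0 < C1 := div_pos (Real.rpow_pos_of_pos hη2 r) (by linarith)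
  have hC2pos : 0 < C2 := div_pos (pow_pos hη2 n) (by positivity)
  refine ⟨min C1 C2, 1 + 1/r + 2*M, lt_min hC1pos hC2pos, by positivity, ?_⟩
  intro i hi
  set x := (i:ℝ) with hx_def
  have hx1 : (1:ℝ) ≤ x := by rw [hx_def]; exact_mod_cast hi
  have hx0 : (0:ℝ) < x := by linarith
  set A := η * x with hA
  have hA0 : 0 < A := mul_pos hη0 hx0
  have hAx : A ≤ x := by
    rw [hA]
    have := mul_le_mul_of_nonneg_right hη1.le hx0.le
    linarith only [this]
  set L := Real.log x with hL
  have hL0 : 0 ≤ L := Real.log_nonneg hx1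
  have hexpL : Real.exp L = x := Real.exp_log hx0
  set s₀ := L - A with hs₀
  set b := min s₀ 0 with hb
  have hb0 : b ≤ 0 := min_le_right _ _
  have hbs : b ≤ s₀ := min_le_left _ _
  have hbA : -A ≤ b := le_min (by linarith) (by linarith)
  have h1b : 1 - b ≤ 1 + x := by linarith
  have h1b1 : (1:ℝ) ≤ 1 - b := by linarith
  set f := fun s : ℝ => min x (Real.exp (s + A)) * hker r s with hf
  have hmin_nonneg : ∀ s : ℝ, 0 ≤ min x (Real.exp (s + A)) :=
    fun s => le_min hx0.le (Real.exp_pos _).le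
  have hf_nonneg : ∀ s, 0 ≤ f s := fun s => mul_nonneg (hmin_nonneg s) (hker_nonneg r s)
  have hmin_le_exp : ∀ s : ℝ, min x (Real.exp (s+A)) ≤ Real.exp (s+A) := fun s => min_le_right _ _
  have hmin_le_x : ∀ s : ℝ, min x (Real.exp (s+A)) ≤ x := fun s => min_le_left _ _
  have hmin_eq : ∀ s : ℝ, s₀ ≤ s → min x (Real.exp (s + A)) = x := by
    intro s hs
    apply min_eq_left
    calc x = Real.exp L := hexpL.symm
    _ ≤ Real.exp (s + A) := Real.exp_le_exp.mpr (by rw [hs₀] at hs; linarith)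
  have hfm : Measurable f := by
    apply Measurable.mul
    · exact measurable_const.min (Real.measurable_exp.comp (measurable_id.add_const A))
    · exact hker_meas r
  have hexpint : IntegrableOn (fun s : ℝ => Real.exp (-s)) (Ioi (0:ℝ)) := by
    simpa using exp_neg_integrableOn_Ioi 0 one_pos
  have hIpos : IntegrableOn f (Ioi 0) := by
    apply Integrable.mono' (hexpint.const_mul x)
    · exact hfm.aestronglyMeasurable
    · filter_upwards [ae_restrict_mem measurableSet_Ioi] with s hs
      have h0s : (0:ℝ) ≤ s := le_of_lt hs
      rw [Real.norm_of_nonneg (hf_nonneg s)]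
      show min x (Real.exp (s + A)) * hker r s ≤ x * Real.exp (-s)
      rw [hker_of_nonneg r h0s]
      exact mul_le_mul_of_nonneg_right (hmin_le_x s) (Real.exp_pos _).le
  have hIneg : IntegrableOn f (Iic 0) := by
    apply Integrable.mono' ((aux_exp_Iic 0).const_mul (M * Real.exp A))
    · exact hfm.aestronglyMeasurable
    · filter_upwards [ae_restrict_mem measurableSet_Iic] with s hs
      have hs0 : s ≤ 0 := hs
      rw [Real.norm_of_nonneg (hf_nonneg s)]
      have h1s : (1:ℝ) ≤ 1 - s := by linarith
      have e2 : (1-s) ^ (r-1) ≤ (1-s) ^ q :=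
        Real.rpow_le_rpow_of_exponent_le h1s (le_max_left _ _)
      have e4 : (1 + (-s)) ^ q ≤ M * Real.exp ((-s)/2) := hM (-s) (by linarith)
      have e5 : (1-s) ^ (r-1) ≤ M * Real.exp ((-s)/2) := by
        apply e2.trans
        rw [show (1:ℝ) - s = 1 + (-s) by ring]
        exact e4
      show min x (Real.exp (s + A)) * hker r s ≤ M * Real.exp A * Real.exp ((s - 0)/2)
      rw [hker_of_nonpos r hs0]
      calc min x (Real.exp (s+A)) * (1-s) ^ (r-1)
          ≤ Real.exp (s+A) * (M * Real.exp ((-s)/2)) := by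
            apply mul_le_mul (hmin_le_exp s) e5 (Real.rpow_nonneg (by linarith) _)
              (Real.exp_pos _).le
        _ = M * Real.exp A * Real.exp ((s - 0)/2) := by
            rw [show Real.exp (s+A) * (M * Real.exp ((-s)/2))
                = M * (Real.exp (s+A) * Real.exp ((-s)/2)) by ring, ← Real.exp_add,
              show s + A + (-s)/2 = A + (s-0)/2 by ring, Real.exp_add]
            ring
  have hInt : Integrable f := by
    rw [← integrableOn_univ, ← Set.Iic_union_Ioi (a := (0:ℝ))]
    exact hIneg.union hIpos
  have hsplit : (∫ s, f s) = (∫ s in Iic 0, f s) + ∫ s in Ioi 0, f s :=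
    (intervalIntegral.integral_Iic_add_Ioi hIneg hIpos).symm
  -- positive side
  have hPpos_eq : (∫ s in Ioi 0, f s) = ∫ s in Ioi 0, min x (Real.exp (s+A)) * Real.exp (-s) := by
    apply setIntegral_congr_fun measurableSet_Ioi
    intro s hs
    show min x (Real.exp (s + A)) * hker r s = _
    rw [hker_of_nonneg r (le_of_lt hs)]
  have hg_pos_int : IntegrableOn (fun s => min x (Real.exp (s+A)) * Real.exp (-s)) (Ioi 0) := by
    apply hIpos.congr_fun ?_ measurableSet_Ioi
    intro s hs
    show min x (Real.exp (s + A)) * hker r s = _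
    rw [hker_of_nonneg r (le_of_lt hs)]
  have hPpos_le : (∫ s in Ioi 0, f s) ≤ x := by
    rw [hPpos_eq]
    calc (∫ s in Ioi 0, min x (Real.exp (s+A)) * Real.exp (-s))
        ≤ ∫ s in Ioi 0, x * Real.exp (-s) :=
          setIntegral_mono_on hg_pos_int (hexpint.const_mul x) measurableSet_Ioi
            (fun s _ => mul_le_mul_of_nonneg_right (hmin_le_x s) (Real.exp_pos _).le)
      _ = x * ∫ s in Ioi 0, Real.exp (-s) := integral_const_mul x _
      _ = x := by rw [integral_exp_neg_Ioi_zero, mul_one]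
  have hPpos_ge : min x (Real.exp A) ≤ ∫ s in Ioi 0, f s := by
    rw [hPpos_eq]
    calc min x (Real.exp A) = min x (Real.exp A) * ∫ s in Ioi 0, Real.exp (-s) := by
          rw [integral_exp_neg_Ioi_zero, mul_one]
      _ = ∫ s in Ioi 0, min x (Real.exp A) * Real.exp (-s) := (integral_const_mul _ _).symm
      _ ≤ ∫ s in Ioi 0, min x (Real.exp (s+A)) * Real.exp (-s) := by
          apply setIntegral_mono_on (hexpint.const_mul _) hg_pos_int measurableSet_Ioi
          intro s hs
          apply mul_le_mul_of_nonneg_right _ (Real.exp_pos _).le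
          apply le_min (min_le_left _ _)
          exact (min_le_right _ _).trans (Real.exp_le_exp.mpr (by
            have : (0:ℝ) < s := hs
            linarith))
  -- negative side decomposition
  have hIneg_b : IntegrableOn f (Iic b) := hIneg.mono_set (Iic_subset_Iic.mpr hb0)
  have hIneg_oc : IntegrableOn f (Ioc b 0) := hIneg.mono_set Ioc_subset_Iic_self
  have hsplitneg : (∫ s in Iic 0, f s) = (∫ s in Iic b, f s) + ∫ s in Ioc b 0, f s := by
    rw [← setIntegral_union ((Iic_disjoint_Ioi le_rfl).mono_right Ioc_subset_Ioi_self)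
      measurableSet_Ioc hIneg_b hIneg_oc, Set.Iic_union_Ioc_eq_Iic hb0]
  have hpoly_int : IntegrableOn (fun s : ℝ => x * (1-s) ^ (r-1)) (Ioc b 0) := by
    apply IntegrableOn.mono_set _ Ioc_subset_Icc_self
    apply ContinuousOn.integrableOn_Icc
    exact (continuousOn_const.mul ((aux_cont_poly r).mono Icc_subset_Iic_self))
  have hIoc_le : (∫ s in Ioc b 0, f s) ≤ x * (((1-b) ^ r - 1)/r) := by
    calc (∫ s in Ioc b 0, f s) ≤ ∫ s in Ioc b 0, x * (1-s) ^ (r-1) := by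
          apply setIntegral_mono_on hIneg_oc hpoly_int measurableSet_Ioc
          intro s hs
          show min x (Real.exp (s + A)) * hker r s ≤ _
          rw [hker_of_nonpos r hs.2]
          exact mul_le_mul_of_nonneg_right (hmin_le_x s) (Real.rpow_nonneg (by
            have := hs.2; linarith) _)
      _ = x * (((1-b) ^ r - 1)/r) := by
          rw [← intervalIntegral.integral_of_le hb0, intervalIntegral.integral_const_mul,
            aux_int_poly hr hb0]
  have hIic_le : (∫ s in Iic b, f s) ≤ x * M * (1-b) ^ q * 2 := by
    have hgi := (aux_exp_Iic b).const_mul (x * M * (1-b) ^ q)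
    calc (∫ s in Iic b, f s)
        ≤ ∫ s in Iic b, (x * M * (1-b) ^ q) * Real.exp ((s-b)/2) := by
          apply setIntegral_mono_on hIneg_b hgi measurableSet_Iic
          intro s hs
          have hsb : s ≤ b := hs
          have hs0 : s ≤ 0 := hsb.trans hb0
          have h1s : (1:ℝ) ≤ 1 - s := by linarith
          show min x (Real.exp (s + A)) * hker r s ≤ _
          rw [hker_of_nonpos r hs0]
          have e1 : min x (Real.exp (s+A)) ≤ x * Real.exp (s - b) := by
            apply (hmin_le_exp s).trans
            calc Real.exp (s+A) ≤ Real.exp (s - b + L) := Real.exp_le_exp.mpr (by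
                  rw [hs₀] at hbs; linarith)
              _ = x * Real.exp (s - b) := by rw [Real.exp_add, hexpL]; ring
          have e2 : (1-s) ^ (r-1) ≤ (1-s) ^ q :=
            Real.rpow_le_rpow_of_exponent_le h1s (le_max_left _ _)
          have e3 : (1-s) ^ q ≤ (1-b) ^ q * (1 + (b - s)) ^ q := by
            rw [← Real.mul_rpow (by linarith) (by linarith)]
            apply Real.rpow_le_rpow (by linarith) _ hq0
            nlinarith only [mul_nonneg (sub_nonneg.mpr hsb) (neg_nonneg.mpr hb0)]
          have e4 : (1 + (b-s)) ^ q ≤ M * Real.exp ((b-s)/2) := hM (b-s) (by linarith)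
          calc min x (Real.exp (s+A)) * (1-s) ^ (r-1)
              ≤ (x * Real.exp (s-b)) * ((1-b) ^ q * (M * Real.exp ((b-s)/2))) := by
                apply mul_le_mul e1 (e2.trans (e3.trans ?_)) (Real.rpow_nonneg (by linarith) _)
                  (by positivity)
                exact mul_le_mul_of_nonneg_left e4 (Real.rpow_nonneg (by linarith) _)
            _ = (x * M * (1-b) ^ q) * (Real.exp (s-b) * Real.exp ((b-s)/2)) := by ring
            _ = (x * M * (1-b) ^ q) * Real.exp ((s-b)/2) := by
                rw [← Real.exp_add, show s - b + (b-s)/2 = (s-b)/2 by ring]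
      _ = x * M * (1-b) ^ q * 2 := by rw [integral_const_mul, aux_exp_Iic_int]
  -- rpow arithmetic facts
  have hx1p : (0:ℝ) < 1 + x := by linarith
  have h4 : (1+x) ^ (1+r) = (1+x) * (1+x) ^ r := by
    rw [Real.rpow_add hx1p, Real.rpow_one]
  have h7 : (0:ℝ) < (1+x) ^ r := Real.rpow_pos_of_pos hx1p r
  have hbr : (1-b) ^ r ≤ (1+x) ^ r := Real.rpow_le_rpow (by linarith) h1b hr.le
  have hbq : (1-b) ^ q ≤ (1+x) ^ r := by
    calc (1-b) ^ q ≤ (1+x) ^ q := Real.rpow_le_rpow (by linarith) h1b hq0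
      _ ≤ (1+x) ^ r := Real.rpow_le_rpow_of_exponent_le (by linarith) hqr
  have h6 : x ≤ (1+x) ^ (1+r) := by
    calc x ≤ 1 + x := by linarith
      _ = (1+x) ^ (1:ℝ) := (Real.rpow_one _).symm
      _ ≤ (1+x) ^ (1+r) := Real.rpow_le_rpow_of_exponent_le (by linarith) (by linarith)
  constructor
  · -- LOWER BOUND
    have hPneg_nonneg : 0 ≤ ∫ s in Iic 0, f s :=
      setIntegral_nonneg measurableSet_Iic (fun s _ => hf_nonneg s)
    show min C1 C2 * (1+x) ^ (1+r) ≤ ∫ s, f s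
    by_cases hcase : L ≤ A/2
    · -- case A
      have hs00 : s₀ ≤ 0 := by rw [hs₀]; linarith
      have hxlow : x ≤ Real.exp A := by
        rw [← hexpL]; exact Real.exp_le_exp.mpr (by linarith)
      have h8 : (∫ s in Ioc s₀ 0, f s) ≤ ∫ s in Iic 0, f s := by
        apply setIntegral_mono_set hIneg (Filter.Eventually.of_forall hf_nonneg)
        exact HasSubset.Subset.eventuallyLE Ioc_subset_Iic_self
      have h9 : (∫ s in Ioc s₀ 0, f s) = x * (((1-s₀) ^ r - 1)/r) := by
        rw [setIntegral_congr_fun measurableSet_Ioc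
          (g := fun s : ℝ => x * (1-s) ^ (r-1)) ?_]
        · rw [← intervalIntegral.integral_of_le hs00, intervalIntegral.integral_const_mul,
            aux_int_poly hr hs00]
        · intro s hs
          show min x (Real.exp (s + A)) * hker r s = _
          rw [hker_of_nonpos r hs.2, hmin_eq s hs.1.le]
      set X := (1-s₀) ^ r with hX
      have hX1 : (1:ℝ) ≤ X := by
        calc (1:ℝ) = (1:ℝ) ^ r := (Real.one_rpow r).symm
          _ ≤ X := Real.rpow_le_rpow zero_le_one (by rw [hs₀]; linarith) hr.le
      have hkey : x * ((X - 1)/r) + x ≥ x * X / max 1 r := by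
        have hdiv : (X - 1)/r + 1 ≥ X / max 1 r := by
          rcases le_total r 1 with h | h
          · rw [max_eq_left h]
            rw [ge_iff_le, div_one]
            have hXr : (X - 1) * r ≤ (X - 1) * 1 :=
              mul_le_mul_of_nonneg_left h (by linarith only [hX1])
            rw [← sub_le_iff_le_add, le_div_iff₀ hr]
            linarith only [hXr]
          · rw [max_eq_right h]
            rw [ge_iff_le, div_le_iff₀ (by linarith), add_mul, div_mul_cancel₀ _ hr.ne']
            linarith only [h, hX1]
        have := mul_le_mul_of_nonneg_left hdiv hx0.le
        calc x * X / max 1 r = x * (X / max 1 r) := by ring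
          _ ≤ x * ((X-1)/r + 1) := this
          _ = x * ((X-1)/r) + x := by ring
      have hXlow : (η/2) ^ r * (1+x) ^ r ≤ X := by
        rw [← Real.mul_rpow hη2.le hx1p.le]
        apply Real.rpow_le_rpow (by positivity) _ hr.le
        have expand : (η/2) * (1+x) = η/2 + A/2 := by rw [hA]; ring
        rw [expand, hs₀]
        linarith
      have hI_ge : x * ((X - 1)/r) + x ≤ ∫ s, f s := by
        rw [hsplit]
        have : x * ((X-1)/r) ≤ ∫ s in Iic 0, f s := by
          rw [show x * ((X-1)/r) = x * (((1-s₀) ^ r - 1)/r) by rw [hX]]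
          rw [← h9]; exact h8
        have hx_ge : x ≤ ∫ s in Ioi 0, f s := by
          calc x = min x (Real.exp A) := (min_eq_left hxlow).symm
            _ ≤ _ := hPpos_ge
        linarith only [this, hx_ge]
      calc min C1 C2 * (1+x) ^ (1+r) ≤ C1 * (1+x) ^ (1+r) := by
            apply mul_le_mul_of_nonneg_right (min_le_left _ _) (by positivity)
        _ ≤ x * X / max 1 r := by
            rw [hC1, h4]
            rw [div_mul_eq_mul_div, div_le_div_iff₀ (by linarith) hmax1r]
            have hstep : (η/2) ^ r * ((1+x) * (1+x) ^ r) ≤ 2 * x * X := by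
              have h2x : 1 + x ≤ 2 * x := by linarith only [hx1]
              calc (η/2) ^ r * ((1+x) * (1+x) ^ r)
                  = (1+x) * ((η/2) ^ r * (1+x) ^ r) := by ring
                _ ≤ (2*x) * X := mul_le_mul h2x hXlow (by positivity) (by linarith only [hx0])
                _ = 2 * x * X := by ring
            calc (η/2) ^ r * ((1+x) * (1+x) ^ r) * max 1 r ≤ (2*x*X) * max 1 r :=
                  mul_le_mul_of_nonneg_right hstep hmax1r.le
              _ = x * X * (2 * max 1 r) := by ring
        _ ≤ x * ((X - 1)/r) + x := hkey
        _ ≤ ∫ s, f s := hI_ge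
    · -- case B
      push_neg at hcase
      have hI_ge : min x (Real.exp A) ≤ ∫ s, f s := by
        rw [hsplit]; linarith only [hPpos_ge, hPneg_nonneg]
      have key0 : (1+x) ^ (1+r) ≤ 2 ^ (1+r) * x ^ n := by
        calc (1+x) ^ (1+r) ≤ (2*x) ^ (1+r) :=
              Real.rpow_le_rpow (by linarith) (by linarith) (by linarith)
          _ = 2 ^ (1+r) * x ^ (1+r) := Real.mul_rpow (by norm_num) hx0.le
          _ ≤ 2 ^ (1+r) * x ^ (n:ℝ) := by
              apply mul_le_mul_of_nonneg_left (Real.rpow_le_rpow_of_exponent_le hx1 hn) h2r.le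
          _ = 2 ^ (1+r) * x ^ n := by rw [Real.rpow_natCast]
      refine le_trans ?_ hI_ge
      rcases le_total x (Real.exp A) with hc | hc
      · rw [min_eq_left hc]
        have hx_big : Real.exp (A/2) ≤ x := by
          rw [← hexpL]; exact Real.exp_le_exp.mpr hcase.le
        have hfact : (A/2) ^ n ≤ n.factorial * Real.exp (A/2) := aux_pow_le n (by positivity)
        have hxn : x ^ n = (2/η) ^ n * (A/2) ^ n := by
          rw [← mul_pow]
          congr 1
          rw [hA, show (2/η) * (η * x / 2) = (η/η) * x by ring, div_self hη0.ne', one_mul]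
        have hxn_le : x ^ n ≤ (2/η) ^ n * ((n.factorial : ℝ) * x) := by
          rw [hxn]
          apply mul_le_mul_of_nonneg_left _ (by positivity)
          exact hfact.trans (mul_le_mul_of_nonneg_left hx_big hnfac.le)
        have hmul : ((η/2 : ℝ)) ^ n * (2/η) ^ n = 1 := by
          rw [← mul_pow, show (η/2) * (2/η) = (η/η) * (2/2) by ring, div_self hη0.ne']
          norm_num
        calc min C1 C2 * (1+x) ^ (1+r) ≤ C2 * (1+x) ^ (1+r) := by
              apply mul_le_mul_of_nonneg_right (min_le_right _ _) (by positivity)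
          _ ≤ C2 * (2 ^ (1+r) * ((2/η) ^ n * ((n.factorial : ℝ) * x))) := by
              apply mul_le_mul_of_nonneg_left _ hC2pos.le
              calc (1+x) ^ (1+r) ≤ 2 ^ (1+r) * x ^ n := key0
                _ ≤ _ := mul_le_mul_of_nonneg_left hxn_le h2r.le
          _ = x := by
              rw [hC2, div_mul_eq_mul_div, div_eq_iff (by positivity)]
              rw [show (η/2) ^ n * (2 ^ (1+r) * ((2/η) ^ n * ((n.factorial:ℝ) * x)))
                = ((η/2) ^ n * (2/η) ^ n) * (2 ^ (1+r) * ((n.factorial:ℝ) * x)) by ring,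
                hmul]
              ring
      · rw [min_eq_right hc]
        have hfact : A ^ n ≤ n.factorial * Real.exp A := aux_pow_le n hA0.le
        have hxn : x ^ n = (1/η) ^ n * A ^ n := by
          rw [← mul_pow]
          congr 1
          rw [hA, show (1/η) * (η * x) = (η/η) * x by ring, div_self hη0.ne', one_mul]
        have hxn_le : x ^ n ≤ (1/η) ^ n * ((n.factorial : ℝ) * Real.exp A) := by
          rw [hxn]
          exact mul_le_mul_of_nonneg_left hfact (by positivity)
        have hmul : ((η/2 : ℝ)) ^ n * (1/η) ^ n = (1/2) ^ n := by
          rw [← mul_pow, show (η/2) * (1/η) = (η/η) * (1/2) by ring, div_self hη0.ne', one_mul]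
        have hhalf : ((1:ℝ)/2) ^ n ≤ 1 := pow_le_one₀ (by norm_num) (by norm_num)
        calc min C1 C2 * (1+x) ^ (1+r) ≤ C2 * (1+x) ^ (1+r) := by
              apply mul_le_mul_of_nonneg_right (min_le_right _ _) (by positivity)
          _ ≤ C2 * (2 ^ (1+r) * ((1/η) ^ n * ((n.factorial : ℝ) * Real.exp A))) := by
              apply mul_le_mul_of_nonneg_left _ hC2pos.le
              calc (1+x) ^ (1+r) ≤ 2 ^ (1+r) * x ^ n := key0
                _ ≤ _ := mul_le_mul_of_nonneg_left hxn_le h2r.le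
          _ = (1/2) ^ n * Real.exp A := by
              rw [hC2, div_mul_eq_mul_div, div_eq_iff (by positivity)]
              rw [show (η/2) ^ n * (2 ^ (1+r) * ((1/η) ^ n * ((n.factorial:ℝ) * Real.exp A)))
                = ((η/2) ^ n * (1/η) ^ n) * (2 ^ (1+r) * ((n.factorial:ℝ) * Real.exp A)) by ring,
                hmul]
              ring
          _ ≤ Real.exp A := by
              have := mul_le_mul_of_nonneg_right hhalf (Real.exp_pos A).le
              linarith only [this]
  · -- UPPER BOUND
    show (∫ s, f s) ≤ (1 + 1/r + 2*M) * (1+x) ^ (1+r)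
    rw [hsplit, hsplitneg]
    have hbr1 : (1:ℝ) ≤ (1-b) ^ r := by
      calc (1:ℝ) = (1:ℝ) ^ r := (Real.one_rpow r).symm
        _ ≤ (1-b) ^ r := Real.rpow_le_rpow zero_le_one h1b1 hr.le
    have e1a : ((1-b) ^ r - 1)/r ≤ (1+x) ^ r / r := by gcongr; linarith
    have e1 : x * (((1-b) ^ r - 1)/r) ≤ (1+x) ^ (1+r) * (1/r) := by
      rw [h4]
      have h0 : 0 ≤ ((1-b) ^ r - 1)/r := div_nonneg (by linarith) hr.le
      calc x * (((1-b) ^ r - 1)/r) ≤ (1+x) * ((1+x) ^ r / r) :=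
            mul_le_mul (by linarith) e1a h0 (by linarith)
        _ = (1+x) * (1+x) ^ r * (1/r) := by ring
    have e2 : x * M * (1-b) ^ q * 2 ≤ 2*M*(1+x) ^ (1+r) := by
      rw [h4]
      have hthis : x * (1-b) ^ q ≤ (1+x) * (1+x) ^ r :=
        mul_le_mul (by linarith) hbq (Real.rpow_nonneg (by linarith) _) (by linarith)
      calc x * M * (1-b) ^ q * 2 = (2*M) * (x * (1-b) ^ q) := by ring
        _ ≤ (2*M) * ((1+x) * (1+x) ^ r) := mul_le_mul_of_nonneg_left hthis (by positivity)
        _ = 2*M*((1+x) * (1+x) ^ r) := by ring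
    have expand : (1 + 1/r + 2*M) * ((1+x) ^ (1+r))
        = (1+x) ^ (1+r) + (1+x) ^ (1+r) * (1/r) + 2*M*(1+x) ^ (1+r) := by ring
    rw [expand]
    have t1 : (∫ s in Iic b, f s) ≤ 2*M*(1+x) ^ (1+r) := hIic_le.trans e2
    have t2 : (∫ s in Ioc b 0, f s) ≤ (1+x) ^ (1+r) * (1/r) := hIoc_le.trans e1
    have t3 : (∫ s in Ioi 0, f s) ≤ (1+x) ^ (1+r) := hPpos_le.trans h6
    linarith only [t1, t2, t3]
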